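/- If (a, b) is a GCP of length N, then for any unimodular complex number w and any nonnegative integer d, the pair (p_a(z) + w z^{N+d} p_b(z), p_a(z) − w z^{N+d} p_b(z)) defines a GCP of length 2N + d (the iterative Golay construction with zero insertion/shift). -/

import Mathlib

noncomputable def pPoly (a : ℤ → ℂ) (N : ℕ) (z : ℂ) : ℂ :=
  ∑ n ∈ Finset.range N, a n * z ^ n

/-- Iterative Golay construction with shift: if `(a,b)` is a GCP (polynomial
criterion), then `(p_a(z) + w z^{N+d} p_b(z), p_a(z) − w z^{N+d} p_b(z))`
satisfies the GCP polynomial criterion (for a GCP of length `2N + d`). -/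
theorem stmt7 (N d : ℕ) (a b : ℤ → ℂ) (w : ℂ) (hw : ‖w‖ = 1)
    (hGCP : ∃ C : ℝ, ∀ z : ℂ, ‖z‖ = 1 →
      ‖pPoly a N z‖ ^ 2 + ‖pPoly b N z‖ ^ 2 = C) :
    ∃ C : ℝ, ∀ z : ℂ, ‖z‖ = 1 →
      ‖pPoly a N z + w * z ^ (N + d) * pPoly b N z‖ ^ 2 +
        ‖pPoly a N z - w * z ^ (N + d) * pPoly b N z‖ ^ 2 = C := by
  obtain ⟨C, hC⟩ := hGCP
  refine ⟨2 * C, fun z hz => ?_⟩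
  have h1 : ‖w * z ^ (N + d) * pPoly b N z‖ = ‖pPoly b N z‖ := by
    simp [norm_mul, norm_pow, hw, hz]
  have hpar := parallelogram_law_with_norm ℝ (pPoly a N z) (w * z ^ (N + d) * pPoly b N z)
  have : ‖pPoly a N z + w * z ^ (N + d) * pPoly b N z‖ ^ 2 +
      ‖pPoly a N z - w * z ^ (N + d) * pPoly b N z‖ ^ 2 =
      2 * (‖pPoly a N z‖ ^ 2 + ‖pPoly b N z‖ ^ 2) := by
    rw [← h1]
    simpa [sq] using hpar
  rw [this, hC z hz]
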